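/- Let ν ≥ 0 be an integer and let L_ν denote the operator u ↦ Δ_ν u − u acting on smooth functions on (0,∞). Then for all integers m ≥ 1 and j ≥ 0 and every r > 0, the m-fold iterate satisfies L_ν^m ψ_j (r) = 2^m · (∏_{i=0}^{m−1} (j + i − ν)) · ψ_{j+m}(r), where the factors j + i − ν are taken in ℤ. In particular L_ν^m ψ_j = 0 on (0,∞) whenever ν − m < j ≤ ν. -/

import Mathlib

open Polynomial

/-- The polynomials `g_j`, defined by `g_0 = 1` and `g_{j+1}(t) = t³ g_j'(t) + t g_j(t)`. -/
noncomputable def g : ℕ → Polynomial ℤ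
  | 0 => 1
  | j + 1 => X ^ 3 * derivative (g j) + X * g j

/-- `ψ_j(r) = e^{-r} g_j(1/r)`. -/
noncomputable def psi (j : ℕ) (r : ℝ) : ℝ := Real.exp (-r) * (Polynomial.aeval r⁻¹) (g j)

/-- The operator `L_ν u = Δ_ν u - u`, where `Δ_ν u(r) = u''(r) + (2ν/r) u'(r)`. -/
noncomputable def Lop (ν : ℕ) (u : ℝ → ℝ) : ℝ → ℝ :=
  fun r => (deriv (deriv u) r + 2 * (ν : ℝ) / r * deriv u r) - u r

lemma key : ∀ j : ℕ, (X:Polynomial ℤ)^4 * derivative (derivative (g j)) + 2*X^3*derivative (g j)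
    + 2*X^2*derivative (g j) = C (2*(j:ℤ)) * g (j+1) := by
  intro j
  induction j with
  | zero => simp [g]
  | succ j ih =>
    have h2 := congrArg derivative ih
    simp only [g, derivative_add, derivative_mul, derivative_X_pow, derivative_X, derivative_C,
      derivative_one, derivative_ofNat, Nat.cast_ofNat, Nat.cast_succ, map_mul, map_ofNat,
      map_add, map_one, map_zero, Nat.cast_zero, Int.cast_zero] at h2 ih ⊢
    linear_combination (X:Polynomial ℤ)^3 * h2 + X * ih

/-- The formal "derivative" operation on polynomial parts: `(e^{-r} p(1/r))' = e^{-r} (Dp p)(1/r)`. -/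
noncomputable def Dp (p : Polynomial ℤ) : Polynomial ℤ := -(p + X^2 * derivative p)

noncomputable def F (p : Polynomial ℤ) (r : ℝ) : ℝ := Real.exp (-r) * (Polynomial.aeval r⁻¹) p

lemma step (ν j : ℕ) :
    Dp (Dp (g j)) + C (2*(ν:ℤ)) * X * Dp (g j) - g j = C (2*((j:ℤ) - ν)) * g (j+1) := by
  have h := key j
  have hg : g (j+1) = X ^ 3 * derivative (g j) + X * g j := rfl
  simp only [Dp, derivative_neg, derivative_add, derivative_mul, derivative_X_pow,
    derivative_X, Nat.cast_ofNat, hg, map_mul, map_ofNat, map_sub] at *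
  linear_combination h

lemma F_hasDerivAt (p : Polynomial ℤ) {r : ℝ} (hr : r ≠ 0) :
    HasDerivAt (F p) (F (Dp p) r) r := by
  have h1 : HasDerivAt (fun x : ℝ => Real.exp (-x)) (-Real.exp (-r)) r := by
    simpa using (hasDerivAt_neg r).exp
  have h2 : HasDerivAt (fun x : ℝ => (aeval x⁻¹ p : ℝ))
      ((aeval r⁻¹ (derivative p)) * (-(r^2)⁻¹)) r :=
    (p.hasDerivAt_aeval (r⁻¹ : ℝ)).comp r (hasDerivAt_inv hr)
  have : HasDerivAt (fun x : ℝ => Real.exp (-x) * (aeval x⁻¹ p : ℝ)) _ r := h1.mul h2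
  convert this using 1
  · rfl
  simp only [F, Dp, map_neg, map_add, map_mul, map_pow, aeval_X]
  have : (r^2)⁻¹ = (r⁻¹)^2 := by rw [inv_pow]
  rw [this]; ring

lemma deriv_F (p : Polynomial ℤ) {r : ℝ} (hr : r ≠ 0) : deriv (F p) r = F (Dp p) r :=
  (F_hasDerivAt p hr).deriv

lemma deriv_deriv_F (p : Polynomial ℤ) {r : ℝ} (hr : r ≠ 0) :
    deriv (deriv (F p)) r = F (Dp (Dp p)) r := by
  have he : deriv (F p) =ᶠ[nhds r] F (Dp p) := by
    filter_upwards [compl_singleton_mem_nhds hr] with x hx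
    exact deriv_F p hx
  rw [he.deriv_eq, deriv_F _ hr]

lemma Lop_F (ν : ℕ) (p : Polynomial ℤ) {r : ℝ} (hr : r ≠ 0) :
    Lop ν (F p) r = F (Dp (Dp p) + C (2*(ν:ℤ)) * X * Dp p - p) r := by
  unfold Lop
  rw [deriv_deriv_F p hr, deriv_F p hr]
  simp only [F, map_add, map_sub, map_mul, aeval_X, aeval_C, map_ofNat]
  push_cast
  field_simp

lemma Lop_psi (ν j : ℕ) {r : ℝ} (hr : r ≠ 0) :
    Lop ν (psi j) r = (2*((j:ℤ) - ν) : ℤ) * psi (j+1) r := by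
  have hp : psi j = F (g j) := rfl
  have hp1 : psi (j+1) = F (g (j+1)) := rfl
  rw [hp, hp1, Lop_F ν (g j) hr, step ν j]
  simp only [F, map_mul, map_sub, map_ofNat, aeval_C]
  push_cast
  ring

lemma Lop_congr (ν : ℕ) (u v : ℝ → ℝ) (c : ℝ) (h : ∀ x : ℝ, x ≠ 0 → u x = c * v x)
    {r : ℝ} (hr : r ≠ 0) : Lop ν u r = c * Lop ν v r := by
  have he : u =ᶠ[nhds r] fun x => c * v x := by
    filter_upwards [compl_singleton_mem_nhds hr] with x hx
    exact h x hx
  have h1 : deriv u =ᶠ[nhds r] deriv (fun x => c * v x) := he.deriv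
  have h2 : deriv (fun x => c * v x) = fun x => c * deriv v x := by
    funext x; exact deriv_const_mul_field c
  have h3 : deriv (deriv u) r = c * deriv (deriv v) r := by
    rw [h1.deriv_eq, h2]
    exact deriv_const_mul_field c
  have h4 : deriv u r = c * deriv v r := by rw [h1.self_of_nhds, h2]
  unfold Lop
  rw [h3, h4, he.self_of_nhds]
  ring

lemma main_ind (ν j : ℕ) : ∀ m : ℕ, ∀ r : ℝ, r ≠ 0 →
    (Lop ν)^[m] (psi j) r =
      ((2^m * ∏ i ∈ Finset.range m, ((j : ℤ) + i - ν) : ℤ) : ℝ) * psi (j + m) r := by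
  intro m
  induction m with
  | zero => intro r hr; simp
  | succ m ih =>
    intro r hr
    rw [Function.iterate_succ_apply']
    have h := Lop_congr ν ((Lop ν)^[m] (psi j)) (psi (j + m))
      ((2^m * ∏ i ∈ Finset.range m, ((j : ℤ) + i - ν) : ℤ) : ℝ) (fun x hx => ih x hx) hr
    rw [h, Lop_psi ν (j + m) hr]
    rw [Finset.prod_range_succ]
    push_cast
    rw [show j + m + 1 = j + (m + 1) by ring]
    ring

theorem Lop_iterate_psi (ν m j : ℕ) (hm : 1 ≤ m) :
    (∀ r : ℝ, 0 < r →
      (Lop ν)^[m] (psi j) r =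
        2 ^ m * ((∏ i ∈ Finset.range m, ((j : ℤ) + i - ν) : ℤ) : ℝ) * psi (j + m) r) ∧
    ((ν : ℤ) - m < (j : ℤ) → j ≤ ν → ∀ r : ℝ, 0 < r → (Lop ν)^[m] (psi j) r = 0) := by
  constructor
  · intro r hr
    have := main_ind ν j m r (ne_of_gt hr)
    rw [this]; push_cast; ring
  · intro h1 h2 r hr
    have := main_ind ν j m r (ne_of_gt hr)
    rw [this]
    have hz : (∏ i ∈ Finset.range m, ((j : ℤ) + i - ν)) = 0 := by
      apply Finset.prod_eq_zero (i := ν - j) (Finset.mem_range.mpr (by omega))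
      have : ((ν - j : ℕ) : ℤ) = (ν : ℤ) - j := by omega
      rw [this]; ring
    rw [hz]
    push_cast
    ring
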